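/- Let q be a power of 2 and let m ≥ 2 be an integer with gcd(q-1, m(m-1)) = 1. Then the discriminants of the monic irreducible polynomials of degree m in F_q[x] are equally distributed among the elements of F_q^×; that is, for any two elements d_1, d_2 ∈ F_q^×, the number of monic irreducible polynomials of degree m in F_q[x] with discriminant d_1 equals the number with discriminant d_2. -/

import Mathlib

open Polynomial
open scoped Classical

/-- The discriminant of a polynomial `f` of degree `m ≥ 2` over a field `F`, computed in an
algebraic closure via the standard formula
`disc(f) = (-1)^(m(m-1)/2) · a_m^(m-2) · ∏_i f'(α_i)`, where `a_m` is the leading coefficient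
and the `α_i` are the roots of `f` (with multiplicity) in the algebraic closure; this equals
`a_m^(2m-2) · ∏_{i<j} (α_i - α_j)^2`.  For `f` of degree at most 1 it is defined to be `1`. -/
noncomputable def polyDisc {F : Type*} [Field F] (f : F[X]) : AlgebraicClosure F :=
  if f.natDegree ≤ 1 then 1
  else
    (-1) ^ (f.natDegree * (f.natDegree - 1) / 2) *
      algebraMap F (AlgebraicClosure F) f.leadingCoeff ^ (f.natDegree - 2) *
      (Multiset.map (fun a => ((derivative f).map (algebraMap F (AlgebraicClosure F))).eval a)
        (f.map (algebraMap F (AlgebraicClosure F))).roots).prod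

/-- The Möbius function on polynomials over a field: `μ f = (-1)^k` if `f` is squarefree
with `k` (distinct) monic irreducible factors, and `μ f = 0` otherwise. -/
noncomputable def polyMu {F : Type*} [Field F] (f : F[X]) : ℤ :=
  if Squarefree f then (-1) ^ {π : F[X] | π.Monic ∧ Irreducible π ∧ π ∣ f}.ncard else 0

/-- `f` has factorization type `λ` (a partition of `m`): `f` is a product of distinct monic
irreducible polynomials whose degrees form the multiset of parts of `λ`.  The set
`S_{λ,F}` of monic squarefree polynomials of factorization type `λ` is
`{f | hasFactorizationType f λ}`. -/
def hasFactorizationType {F : Type*} [Field F] (f : F[X]) {m : ℕ} (lam : m.Partition) : Prop :=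
  ∃ s : Finset F[X], (∀ π ∈ s, π.Monic ∧ Irreducible π) ∧ (∏ π ∈ s, π) = f ∧
    Multiset.map natDegree s.val = lam.parts

/-- The scaling map `f(x) ↦ c^m f(x/c)`. -/
noncomputable def scaleM {F : Type*} [Field F] (c : F) (m : ℕ) (f : F[X]) : F[X] :=
  C (c ^ m) * f.comp (C c⁻¹ * X)

section ScaleLemmas

variable {F : Type*} [Field F]

lemma scaleM_left_inv (c : F) (hc : c ≠ 0) (m : ℕ) (f : F[X]) :
    scaleM c⁻¹ m (scaleM c m f) = f := by
  simp only [scaleM, inv_inv, mul_comp, C_comp, X_comp, comp_assoc]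
  rw [← mul_assoc (C c⁻¹), ← C_mul, inv_mul_cancel₀ hc, C_1, one_mul, comp_X,
    ← mul_assoc, ← C_mul, ← mul_pow, inv_mul_cancel₀ hc, one_pow, C_1, one_mul]

lemma scaleM_injective (c : F) (hc : c ≠ 0) (m : ℕ) :
    Function.Injective (scaleM c m : F[X] → F[X]) := fun a b hab => by
  have := congrArg (scaleM c⁻¹ m) hab
  rwa [scaleM_left_inv c hc, scaleM_left_inv c hc] at this

lemma natDegree_scaleM (c : F) (hc : c ≠ 0) (m : ℕ) (f : F[X]) :
    (scaleM c m f).natDegree = f.natDegree := by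
  rw [scaleM, natDegree_C_mul (pow_ne_zero _ hc), natDegree_comp,
    natDegree_C_mul_X _ (inv_ne_zero hc), mul_one]

lemma monic_scaleM (c : F) (hc : c ≠ 0) {m : ℕ} {f : F[X]} (hf : f.Monic)
    (hdeg : f.natDegree = m) : (scaleM c m f).Monic := by
  have hq : (C c⁻¹ * X).natDegree ≠ 0 := by
    rw [natDegree_C_mul_X _ (inv_ne_zero hc)]; exact one_ne_zero
  unfold Monic scaleM
  rw [leadingCoeff_mul, leadingCoeff_C, leadingCoeff_comp hq, hf.leadingCoeff, one_mul,
    leadingCoeff_mul, leadingCoeff_C, leadingCoeff_X, mul_one, hdeg, ← mul_pow,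
    mul_inv_cancel₀ hc, one_pow]

lemma irreducible_scaleM (c : F) (hc : c ≠ 0) {f : F[X]} (hirr : Irreducible f)
    (m : ℕ) : Irreducible (scaleM c m f) := by
  have : Invertible c⁻¹ := invertibleOfNonzero (inv_ne_zero hc)
  have h1 : f.comp (C c⁻¹ * X) = algEquivCMulXAddC c⁻¹ 0 f := by
    rw [algEquivCMulXAddC_apply, ← comp_eq_aeval, C_0, add_zero]
  have h2 : Irreducible (f.comp (C c⁻¹ * X)) := by
    rw [h1]; exact (MulEquiv.irreducible_iff (algEquivCMulXAddC c⁻¹ 0)).mpr hirr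
  have hu : IsUnit (C (c ^ m)) := isUnit_C.mpr (pow_ne_zero m hc).isUnit
  exact ((associated_unit_mul_left _ _ hu).symm).irreducible h2

lemma map_scaleM {K : Type*} [Field K] (φ : F →+* K) (c : F) (m : ℕ) (f : F[X]) :
    (scaleM c m f).map φ = scaleM (φ c) m (f.map φ) := by
  simp only [scaleM, Polynomial.map_mul, Polynomial.map_comp, map_C, Polynomial.map_X,
    Polynomial.map_pow, map_pow, map_inv₀, C_pow]

lemma scaleM_eq_prod {K : Type*} [Field K] [IsAlgClosed K] (c : K) (hc : c ≠ 0) (m : ℕ)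
    {p : K[X]} (hp : p.Monic) (hdp : p.natDegree = m) :
    scaleM c m p = (p.roots.map fun r => X - C (c * r)).prod := by
  have hcard : Multiset.card p.roots = m := by
    rw [splits_iff_card_roots.mp (IsAlgClosed.splits p), hdp]
  have hprod := (IsAlgClosed.splits p).eq_prod_roots_of_monic hp
  have e1 : ∀ r : K, (X - C r).comp (C c⁻¹ * X) = C c⁻¹ * (X - C (c * r)) := by
    intro r
    rw [sub_comp, X_comp, C_comp, mul_sub]
    congr 1
    rw [← C_mul, inv_mul_cancel_left₀ hc]
  calc scaleM c m p
      = C (c ^ m) * ((p.roots.map fun r => C c⁻¹ * (X - C (c * r))).prod) := by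
        rw [scaleM]
        nth_rw 1 [hprod]
        rw [multiset_prod_comp, Multiset.map_map]
        simp only [Function.comp, e1]
    _ = C (c ^ m) * ((C c⁻¹) ^ m * (p.roots.map fun r => X - C (c * r)).prod) := by
        rw [Multiset.prod_map_mul, Multiset.map_const', Multiset.prod_replicate, hcard]
    _ = (p.roots.map fun r => X - C (c * r)).prod := by
        rw [← mul_assoc, ← C_pow, ← C_mul, ← mul_pow, mul_inv_cancel₀ hc, one_pow, C_1, one_mul]

lemma roots_scaleM {K : Type*} [Field K] [IsAlgClosed K] (c : K) (hc : c ≠ 0) (m : ℕ)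
    {p : K[X]} (hp : p.Monic) (hdp : p.natDegree = m) :
    (scaleM c m p).roots = p.roots.map fun r => c * r := by
  rw [scaleM_eq_prod c hc m hp hdp,
    show (p.roots.map fun r => X - C (c * r)) =
      ((p.roots.map fun r => c * r).map fun a => X - C a) by rw [Multiset.map_map]; rfl]
  exact roots_multiset_prod_X_sub_C _

lemma eval_derivative_scaleM {K : Type*} [Field K] (c : K) (hc : c ≠ 0) {m : ℕ}
    (hm : 1 ≤ m) (p : K[X]) (r : K) :
    eval (c * r) (derivative (scaleM c m p)) = c ^ (m - 1) * eval r (derivative p) := by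
  rw [scaleM, derivative_C_mul, derivative_comp]
  have hd : derivative (C c⁻¹ * X) = C c⁻¹ := by
    rw [derivative_C_mul, derivative_X, mul_one]
  rw [hd, eval_mul, eval_mul, eval_C, eval_C, eval_comp, eval_mul, eval_C, eval_X,
    inv_mul_cancel_left₀ hc]
  have hm1 : m - 1 + 1 = m := by omega
  have h2 : c ^ m * c⁻¹ = c ^ (m - 1) := by
    field_simp
    rw [← pow_succ', hm1]
  rw [← mul_assoc, h2]

lemma polyDisc_scaleM (c : F) (hc : c ≠ 0) {m : ℕ} (hm : 2 ≤ m) {f : F[X]}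
    (hf : f.Monic) (hdeg : f.natDegree = m) :
    polyDisc (scaleM c m f) =
      algebraMap F (AlgebraicClosure F) c ^ (m * (m - 1)) * polyDisc f := by
  have hdegs : (scaleM c m f).natDegree = m := by rw [natDegree_scaleM c hc, hdeg]
  have hmono : (scaleM c m f).Monic := monic_scaleM c hc hf hdeg
  have hc' : algebraMap F (AlgebraicClosure F) c ≠ 0 := by
    simpa using hc
  have hp : (f.map (algebraMap F (AlgebraicClosure F))).Monic :=
    hf.map (algebraMap F (AlgebraicClosure F))
  have hdp : (f.map (algebraMap F (AlgebraicClosure F))).natDegree = m := by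
    rw [natDegree_map, hdeg]
  have hcard : Multiset.card (f.map (algebraMap F (AlgebraicClosure F))).roots = m := by
    rw [splits_iff_card_roots.mp (IsAlgClosed.splits _), hdp]
  rw [polyDisc, polyDisc, if_neg (by rw [hdegs]; omega), if_neg (by rw [hdeg]; omega),
    hdegs, hdeg, hmono.leadingCoeff, hf.leadingCoeff, map_one, one_pow]
  have hroots : ((scaleM c m f).map (algebraMap F (AlgebraicClosure F))).roots
      = (f.map (algebraMap F (AlgebraicClosure F))).roots.map
        fun r => algebraMap F (AlgebraicClosure F) c * r := by
    rw [map_scaleM, roots_scaleM _ hc' m hp hdp]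
  have heval : ∀ r : AlgebraicClosure F,
      ((derivative (scaleM c m f)).map (algebraMap F (AlgebraicClosure F))).eval
        (algebraMap F (AlgebraicClosure F) c * r)
      = algebraMap F (AlgebraicClosure F) c ^ (m - 1) *
        ((derivative f).map (algebraMap F (AlgebraicClosure F))).eval r := by
    intro r
    rw [← derivative_map, map_scaleM, eval_derivative_scaleM _ hc' (m := m) (by omega),
      derivative_map]
  rw [hroots, Multiset.map_map]
  simp only [Function.comp, heval]
  rw [Multiset.prod_map_mul, Multiset.map_const', Multiset.prod_replicate, hcard, ← pow_mul,
    Nat.mul_comm (m - 1) m]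
  ring

end ScaleLemmas

/-- If `q` is a power of `2` and `m ≥ 2` satisfies `gcd(q-1, m(m-1)) = 1`, then the
discriminants of the monic irreducible polynomials of degree `m` are equally distributed among
the elements of `F_q^×`. -/
theorem stmt3 {F : Type*} [Field F] [Fintype F] (q m : ℕ) (hq : Fintype.card F = q)
    (h2 : ∃ n : ℕ, q = 2 ^ n) (hm : 2 ≤ m) (hgcd : Nat.gcd (q - 1) (m * (m - 1)) = 1)
    (d₁ d₂ : F) (hd₁ : d₁ ≠ 0) (hd₂ : d₂ ≠ 0) :
    {f : F[X] | f.Monic ∧ Irreducible f ∧ f.natDegree = m ∧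
        polyDisc f = algebraMap F (AlgebraicClosure F) d₁}.ncard =
    {f : F[X] | f.Monic ∧ Irreducible f ∧ f.natDegree = m ∧
        polyDisc f = algebraMap F (AlgebraicClosure F) d₂}.ncard := by
  have hcop : (Nat.card Fˣ).Coprime (m * (m - 1)) := by
    rw [Nat.card_eq_fintype_card, Fintype.card_units, hq]; exact hgcd
  obtain ⟨u, hu⟩ : ∃ u : Fˣ, u ^ (m * (m - 1)) = Units.mk0 (d₂ * d₁⁻¹)
      (mul_ne_zero hd₂ (inv_ne_zero hd₁)) :=
    ⟨(powCoprime hcop).symm _, by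
      have := (powCoprime hcop).apply_symm_apply (Units.mk0 (d₂ * d₁⁻¹)
        (mul_ne_zero hd₂ (inv_ne_zero hd₁)))
      rwa [powCoprime_apply] at this⟩
  set c : F := (u : F) with hcdef
  have hc : c ≠ 0 := u.ne_zero
  have hpow : c ^ (m * (m - 1)) * d₁ = d₂ := by
    have h := congrArg Units.val hu
    rw [Units.val_pow_eq_pow_val, Units.val_mk0] at h
    rw [hcdef, h, mul_assoc, inv_mul_cancel₀ hd₁, mul_one]
  have himg : {f : F[X] | f.Monic ∧ Irreducible f ∧ f.natDegree = m ∧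
      polyDisc f = algebraMap F (AlgebraicClosure F) d₂}
      = (scaleM c m) '' {f : F[X] | f.Monic ∧ Irreducible f ∧ f.natDegree = m ∧
      polyDisc f = algebraMap F (AlgebraicClosure F) d₁} := by
    ext g
    simp only [Set.mem_image, Set.mem_setOf_eq]
    constructor
    · rintro ⟨hg1, hg2, hg3, hg4⟩
      refine ⟨scaleM c⁻¹ m g, ⟨monic_scaleM _ (inv_ne_zero hc) hg1 hg3,
        irreducible_scaleM _ (inv_ne_zero hc) hg2 m,
        by rw [natDegree_scaleM _ (inv_ne_zero hc), hg3], ?_⟩, ?_⟩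
      · rw [polyDisc_scaleM _ (inv_ne_zero hc) hm hg1 hg3, hg4, ← map_pow, ← map_mul]
        congr 1
        rw [← hpow, ← mul_assoc, ← mul_pow, inv_mul_cancel₀ hc, one_pow, one_mul]
      · have := scaleM_left_inv c⁻¹ (inv_ne_zero hc) m g
        rwa [inv_inv] at this
    · rintro ⟨f, ⟨hf1, hf2, hf3, hf4⟩, rfl⟩
      exact ⟨monic_scaleM _ hc hf1 hf3, irreducible_scaleM _ hc hf2 m,
        by rw [natDegree_scaleM _ hc, hf3],
        by rw [polyDisc_scaleM _ hc hm hf1 hf3, hf4, ← map_pow, ← map_mul, hpow]⟩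
  rw [himg, Set.ncard_image_of_injective _ (scaleM_injective c hc m)]
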